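/- Let r be an integer and set s = r+1. In ℚ[[t]] define v = t·(1−rt)^{−1}, w(t) = v·(1+v)^{r²−1}, and z(t) = t·(1+(1−s)t)^{1−s}. Let f_r ∈ ℚ[[w]] be the unique power series with f_r(v(1+v)^{r²−1}) = (1+v)^{r²}·(1+r²v)^{−1} in ℚ[[v]], and let Q_s ∈ ℚ[[z]] be the unique power series with Q_s(t(1+(1−s)t)^{1−s}) = (1+(1−s)t)^{2s−s²}·(1+(2−s)t)^{(s−1)²}·(1+(1−s)(2−s)t)^{−1} in ℚ[[t]]. Then f_r(w(t)) = Q_s(z(t)) as elements of ℚ[[t]]. -/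

import Mathlib

open PowerSeries

/-- Composition (substitution) `f(g)` of formal power series, correct whenever the
constant term of `g` vanishes. -/
noncomputable def comp (f g : ℚ⟦X⟧) : ℚ⟦X⟧ :=
  PowerSeries.mk fun n => ∑ k ∈ Finset.range (n + 1), coeff k f * coeff n (g ^ k)

/-- Integer power of a formal power series (using the formal inverse for negative
exponents). -/
noncomputable def zp (f : ℚ⟦X⟧) (n : ℤ) : ℚ⟦X⟧ :=
  f ^ n.toNat * f⁻¹ ^ (-n).toNat

namespace SV
open Finset

lemma coeff_pow_zero {g : ℚ⟦X⟧} (hg : constantCoeff g = 0) {n k : ℕ} (h : n < k) :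
    coeff n (g ^ k) = 0 := by
  have hd : (X : ℚ⟦X⟧) ^ k ∣ g ^ k := pow_dvd_pow_of_dvd (X_dvd_iff.2 hg) k
  exact (X_pow_dvd_iff.1 hd) n h

lemma coeff_comp {g : ℚ⟦X⟧} (hg : constantCoeff g = 0) (f : ℚ⟦X⟧) {n N : ℕ} (hn : n < N) :
    coeff n (comp f g) = ∑ k ∈ range N, coeff k f * coeff n (g ^ k) := by
  rw [comp, coeff_mk]
  apply Finset.sum_subset (by intro x hx; simp only [mem_range] at *; omega)
  intro k hk hk'
  simp only [mem_range] at hk hk'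
  rw [coeff_pow_zero hg (by omega), mul_zero]

lemma coeff_eval₂ {g : ℚ⟦X⟧} (hg : constantCoeff g = 0) (P : Polynomial ℚ) (n : ℕ) :
    coeff n (P.eval₂ C g) = ∑ k ∈ range (n + 1), P.coeff k * coeff n (g ^ k) := by
  set N := max (n + 1) (P.natDegree + 1) with hN
  rw [Polynomial.eval₂_eq_sum_range' C
      (lt_of_lt_of_le (Nat.lt_succ_self _) (le_max_right _ _)) g]
  rw [map_sum]
  simp_rw [coeff_C_mul]
  symm
  apply Finset.sum_subset
  · intro x hx
    rw [mem_range] at *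
    exact lt_of_lt_of_le hx (le_max_left _ _)
  · intro k hk hk'
    simp only [mem_range] at hk hk'
    rw [coeff_pow_zero hg (by omega), mul_zero]

lemma coeff_comp_eval₂ {g : ℚ⟦X⟧} (hg : constantCoeff g = 0) (f : ℚ⟦X⟧) {n N : ℕ}
    (hn : n < N) :
    coeff n (comp f g) = coeff n ((trunc N f).eval₂ C g) := by
  rw [coeff_eval₂ hg, coeff_comp hg f (Nat.lt_succ_self n)]
  refine Finset.sum_congr rfl fun k hk => ?_
  simp only [mem_range] at hk
  rw [coeff_trunc, if_pos (by omega)]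

lemma comp_add (a b g : ℚ⟦X⟧) : comp (a + b) g = comp a g + comp b g := by
  ext n
  simp [comp, coeff_mk, add_mul, Finset.sum_add_distrib]

lemma comp_zero (g : ℚ⟦X⟧) : comp 0 g = 0 := by
  ext n; simp [comp, coeff_mk]

lemma comp_C (c : ℚ) (g : ℚ⟦X⟧) : comp (C c) g = C c := by
  ext n
  rw [comp, coeff_mk]
  simp only [coeff_C, ite_mul, zero_mul]
  rw [Finset.sum_ite_eq' (range (n + 1)) 0 fun k => c * coeff n (g ^ k)]
  simp [coeff_one, coeff_C]

lemma comp_one (g : ℚ⟦X⟧) : comp 1 g = 1 := by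
  have := comp_C 1 g; simpa using this

lemma comp_X {g : ℚ⟦X⟧} (hg : constantCoeff g = 0) : comp X g = g := by
  ext n
  rw [comp, coeff_mk]
  simp only [coeff_X, ite_mul, one_mul, zero_mul]
  rw [Finset.sum_ite_eq' (range (n + 1)) 1 fun k => coeff n (g ^ k)]
  rcases Nat.eq_zero_or_pos n with h | h
  · subst h
    simp [coeff_zero_eq_constantCoeff, hg]
  · rw [if_pos (by simp [mem_range]; omega), pow_one]

lemma comp_mul {g : ℚ⟦X⟧} (hg : constantCoeff g = 0) (a b : ℚ⟦X⟧) :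
    comp (a * b) g = comp a g * comp b g := by
  ext n
  set N := n + 1 with hN
  rw [coeff_comp_eval₂ hg (a * b) (Nat.lt_succ_self n)]
  have key : coeff n ((trunc N (a * b)).eval₂ C g)
      = coeff n ((trunc N a * trunc N b).eval₂ C g) := by
    rw [coeff_eval₂ hg, coeff_eval₂ hg]
    refine Finset.sum_congr rfl fun k hk => ?_
    simp only [mem_range] at hk
    congr 1
    rw [coeff_trunc, if_pos (by omega),
      PowerSeries.coeff_mul_eq_coeff_trunc_mul_trunc (n := N) a b (by omega),
      ← Polynomial.coe_mul, Polynomial.coeff_coe]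
  rw [key, Polynomial.eval₂_mul, PowerSeries.coeff_mul, PowerSeries.coeff_mul]
  refine Finset.sum_congr rfl fun p hp => ?_
  rw [HasAntidiagonal.mem_antidiagonal] at hp
  rw [← coeff_comp_eval₂ hg a (show p.1 < N by omega),
    ← coeff_comp_eval₂ hg b (show p.2 < N by omega)]

lemma constantCoeff_comp (f g : ℚ⟦X⟧) : constantCoeff (comp f g) = constantCoeff f := by
  rw [← coeff_zero_eq_constantCoeff_apply, ← coeff_zero_eq_constantCoeff_apply, comp, coeff_mk]
  simp

end SV
namespace SV
open Finset

noncomputable def compHom (g : ℚ⟦X⟧) (hg : constantCoeff g = 0) : ℚ⟦X⟧ →+* ℚ⟦X⟧ where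
  toFun f := comp f g
  map_one' := comp_one g
  map_mul' a b := comp_mul hg a b
  map_zero' := comp_zero g
  map_add' a b := comp_add a b g

lemma comp_pow {g : ℚ⟦X⟧} (hg : constantCoeff g = 0) (a : ℚ⟦X⟧) (k : ℕ) :
    comp (a ^ k) g = comp a g ^ k :=
  map_pow (compHom g hg) a k

lemma ne_zero_of_constantCoeff {a : ℚ⟦X⟧} (ha : constantCoeff a ≠ 0) : a ≠ 0 :=
  fun h => ha (by rw [h]; simp)

lemma inv_unique' {a b : ℚ⟦X⟧} (ha : constantCoeff a ≠ 0) (h : a * b = 1) : b = a⁻¹ := by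
  have h2 := PowerSeries.mul_inv_cancel a ha
  exact mul_left_cancel₀ (ne_zero_of_constantCoeff ha) (by rw [h, h2])

lemma comp_inv {g : ℚ⟦X⟧} (hg : constantCoeff g = 0) {a : ℚ⟦X⟧}
    (ha : constantCoeff a ≠ 0) : comp a⁻¹ g = (comp a g)⁻¹ := by
  apply inv_unique'
  · rw [constantCoeff_comp]; exact ha
  · rw [← comp_mul hg, PowerSeries.mul_inv_cancel a ha, comp_one]

lemma comp_zp {g : ℚ⟦X⟧} (hg : constantCoeff g = 0) {a : ℚ⟦X⟧}
    (ha : constantCoeff a ≠ 0) (e : ℤ) : comp (zp a e) g = zp (comp a g) e := by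
  rw [zp, zp, comp_mul hg, comp_pow hg, comp_pow hg, comp_inv hg ha]

lemma comp_assoc {A v : ℚ⟦X⟧} (hA : constantCoeff A = 0) (hv : constantCoeff v = 0)
    (f : ℚ⟦X⟧) : comp f (comp A v) = comp (comp f A) v := by
  ext n
  have hAv : constantCoeff (comp A v) = 0 := by rw [constantCoeff_comp]; exact hA
  rw [coeff_comp hAv f (Nat.lt_succ_self n), coeff_comp hv (comp f A) (Nat.lt_succ_self n)]
  have h1 : ∀ k, coeff n ((comp A v) ^ k) = ∑ j ∈ range (n + 1), coeff j (A ^ k) * coeff n (v ^ j) := by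
    intro k
    rw [← comp_pow hv, coeff_comp hv (A ^ k) (Nat.lt_succ_self n)]
  have h2 : ∀ j, j ∈ range (n + 1) → coeff j (comp f A) = ∑ k ∈ range (n + 1), coeff k f * coeff j (A ^ k) := by
    intro j hj
    rw [mem_range] at hj
    exact coeff_comp hA f hj
  rw [show (∑ k ∈ range (n + 1), coeff k (comp f A) * coeff n (v ^ k))
      = ∑ k ∈ range (n + 1), (∑ j ∈ range (n + 1), coeff j f * coeff k (A ^ j)) * coeff n (v ^ k)
    from Finset.sum_congr rfl fun k hk => by rw [h2 k hk]]
  simp_rw [h1, Finset.mul_sum, Finset.sum_mul]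
  rw [Finset.sum_comm]
  refine Finset.sum_congr rfl fun j _ => Finset.sum_congr rfl fun k _ => by ring

noncomputable def mkUnit (a : ℚ⟦X⟧) (ha : constantCoeff a ≠ 0) : ℚ⟦X⟧ˣ :=
  ⟨a, a⁻¹, PowerSeries.mul_inv_cancel a ha, PowerSeries.inv_mul_cancel a ha⟩

lemma unit_cc (A : ℚ⟦X⟧ˣ) : constantCoeff (A : ℚ⟦X⟧) ≠ 0 := by
  intro h
  have : constantCoeff ((A : ℚ⟦X⟧) * ((A⁻¹ : ℚ⟦X⟧ˣ) : ℚ⟦X⟧)) = 1 := by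
    rw [Units.mul_inv]; simp
  rw [map_mul, h, zero_mul] at this
  exact zero_ne_one this

lemma coe_inv (A : ℚ⟦X⟧ˣ) : (A : ℚ⟦X⟧)⁻¹ = ((A⁻¹ : ℚ⟦X⟧ˣ) : ℚ⟦X⟧) :=
  (inv_unique' (unit_cc A) (by rw [Units.mul_inv])).symm

lemma zp_units (A : ℚ⟦X⟧ˣ) (e : ℤ) : zp (A : ℚ⟦X⟧) e = ((A ^ e : ℚ⟦X⟧ˣ) : ℚ⟦X⟧) := by
  have key : A ^ e = A ^ e.toNat * (A⁻¹) ^ (-e).toNat := by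
    rcases le_or_gt 0 e with h | h
    · lift e to ℕ using h
      simp [zpow_natCast]
    · have h0 : e.toNat = 0 := by omega
      rw [h0, pow_zero, one_mul]
      have he : e = -(((-e).toNat : ℕ) : ℤ) := by omega
      conv_lhs => rw [he]
      rw [zpow_neg, zpow_natCast, ← inv_pow]
  rw [zp, key, coe_inv]
  push_cast
  rfl

end SV

open SV in
set_option maxHeartbeats 1600000 in
/-- Segre–Verlinde correspondence `f_r(w(t)) = Q_s(z(t))` with `Q_s = W_s^{-4s}·X_s²`,
under the variable changes `w = v(1+v)^{r²-1}`, `z = t(1+(1-s)t)^{1-s}`,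
`v = t(1-rt)⁻¹`, `s = r+1`. -/
theorem segre_verlinde_f (r s : ℤ) (hs : s = r + 1)
    (v w z : ℚ⟦X⟧)
    (hv : v = X * (1 - C (r : ℚ) * X)⁻¹)
    (hw : w = v * zp (1 + v) (r ^ 2 - 1))
    (hz : z = X * zp (1 + C (1 - (s : ℚ)) * X) (1 - s))
    (f Q : ℚ⟦X⟧)
    (hf : comp f (X * zp (1 + X) (r ^ 2 - 1)) =
      zp (1 + X) (r ^ 2) * (1 + C ((r : ℚ) ^ 2) * X)⁻¹)
    (hQ : comp Q z =
      zp (1 + C (1 - (s : ℚ)) * X) (2 * s - s ^ 2) *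
        zp (1 + C (2 - (s : ℚ)) * X) ((s - 1) ^ 2) *
        (1 + C ((1 - (s : ℚ)) * (2 - (s : ℚ))) * X)⁻¹) :
    comp f w = comp Q z := by
  subst hs
  set r' : ℚ := (r : ℚ) with hr'
  have hv0 : constantCoeff v = 0 := by rw [hv]; simp
  have h1X : constantCoeff ((1 : ℚ⟦X⟧) + X) ≠ 0 := by simp
  have hA0 : constantCoeff (X * zp (1 + X) (r ^ 2 - 1)) = 0 := by simp
  -- w = comp A v
  have hwA : w = comp (X * zp (1 + X) (r ^ 2 - 1)) v := by
    rw [comp_mul hv0, comp_X hv0, comp_zp hv0 h1X, comp_add, comp_one, comp_X hv0, hw]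
  have hcc2 : constantCoeff ((1 : ℚ⟦X⟧) + C (r' ^ 2) * X) ≠ 0 := by simp
  rw [hwA, comp_assoc hA0 hv0, hf, hQ]
  rw [comp_mul hv0, comp_zp hv0 h1X, comp_add, comp_one, comp_X hv0,
    comp_inv hv0 hcc2, comp_add, comp_one, comp_mul hv0, comp_C, comp_X hv0]
  -- normalize constants on the RHS
  have e1 : 2 * (r + 1) - (r + 1) ^ 2 = 1 - r ^ 2 := by ring
  have e2 : (r + 1 - 1) ^ 2 = r ^ 2 := by ring
  have c1 : (1 : ℚ) - ((r + 1 : ℤ) : ℚ) = -r' := by push_cast [hr']; ring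
  have c2 : (2 : ℚ) - ((r + 1 : ℤ) : ℚ) = 1 - r' := by push_cast [hr']; ring
  rw [e1, e2, c1, c2]
  have c3 : -r' * ((1:ℚ) - r') = r' ^ 2 - r' := by ring
  rw [c3]
  have hb1 : (1 : ℚ⟦X⟧) + C (-r') * X = 1 - C r' * X := by rw [map_neg]; ring
  rw [hb1]
  -- units
  have h1 : constantCoeff ((1 : ℚ⟦X⟧) - C r' * X) ≠ 0 := by simp
  have h2 : constantCoeff ((1 : ℚ⟦X⟧) + C (1 - r') * X) ≠ 0 := by simp
  have h3 : constantCoeff ((1 : ℚ⟦X⟧) + C (r' ^ 2 - r') * X) ≠ 0 := by simp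
  have hm : ((1 : ℚ⟦X⟧) - C r' * X) * ((1 : ℚ⟦X⟧) - C r' * X)⁻¹ = 1 :=
    PowerSeries.mul_inv_cancel _ h1
  have hu2 : (1 : ℚ⟦X⟧) + C (1 - r') * X = (1 - C r' * X) + X := by
    rw [map_sub, map_one]; ring
  have hu3 : (1 : ℚ⟦X⟧) + C (r' ^ 2 - r') * X = (1 - C r' * X) + C (r' ^ 2) * X := by
    rw [map_sub]; ring
  have huv : (1 : ℚ⟦X⟧) + v = (1 + C (1 - r') * X) * (1 - C r' * X)⁻¹ := by
    rw [hv, hu2, add_mul, hm]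
  have huv2 : (1 : ℚ⟦X⟧) + C (r' ^ 2) * v
      = (1 + C (r' ^ 2 - r') * X) * (1 - C r' * X)⁻¹ := by
    rw [hv, hu3, add_mul, hm, mul_assoc]
  rw [huv, huv2]
  set U1 : ℚ⟦X⟧ˣ := mkUnit _ h1 with hU1
  set U2 : ℚ⟦X⟧ˣ := mkUnit _ h2 with hU2
  set U3 : ℚ⟦X⟧ˣ := mkUnit _ h3 with hU3
  have k1 : ((1 : ℚ⟦X⟧) - C r' * X)⁻¹ = ((U1⁻¹ : ℚ⟦X⟧ˣ) : ℚ⟦X⟧) := coe_inv U1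
  rw [k1]
  have k2 : ((1 : ℚ⟦X⟧) + C (1 - r') * X) * ((U1⁻¹ : ℚ⟦X⟧ˣ) : ℚ⟦X⟧)
      = ((U2 * U1⁻¹ : ℚ⟦X⟧ˣ) : ℚ⟦X⟧) := rfl
  have k3 : ((1 : ℚ⟦X⟧) + C (r' ^ 2 - r') * X) * ((U1⁻¹ : ℚ⟦X⟧ˣ) : ℚ⟦X⟧)
      = ((U3 * U1⁻¹ : ℚ⟦X⟧ˣ) : ℚ⟦X⟧) := rfl
  have z1 : zp ((1 : ℚ⟦X⟧) - C r' * X) (1 - r ^ 2) = ((U1 ^ (1 - r ^ 2 : ℤ) : ℚ⟦X⟧ˣ) : ℚ⟦X⟧) :=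
    zp_units U1 _
  have z2 : zp ((1 : ℚ⟦X⟧) + C (1 - r') * X) (r ^ 2) = ((U2 ^ (r ^ 2 : ℤ) : ℚ⟦X⟧ˣ) : ℚ⟦X⟧) :=
    zp_units U2 _
  have z3 : ((1 : ℚ⟦X⟧) + C (r' ^ 2 - r') * X)⁻¹ = ((U3⁻¹ : ℚ⟦X⟧ˣ) : ℚ⟦X⟧) := coe_inv U3
  rw [k2, k3, zp_units (U2 * U1⁻¹), coe_inv (U3 * U1⁻¹), z1, z2, z3,
    ← Units.val_mul, ← Units.val_mul, ← Units.val_mul]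
  congr 1
  rw [mul_zpow, inv_zpow, mul_inv_rev, inv_inv, zpow_sub, zpow_one]
  simp [div_eq_mul_inv, mul_comm, mul_left_comm, mul_assoc]
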